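/- Let p_u = ⟨u, u₁, ..., u_*, T⟩ and p_v = ⟨v, v₁, ..., v_*, T⟩ be two paths of equal length d ending at a common node T, sharing no nodes except T. Let X' arise from applying the same sequence of mean-pooling linear message passing operations (with shared weight matrices W¹,...,W^{d-2}) along each path up to u_* and v_* respectively, followed by the final aggregation X'[T] = ((X[T] + X'[u_*] + X'[v_*])/3)·W^T. Let X̃ equal X except that the features of u and v are swapped: X̃[u] = X[v], X̃[v] = X[u], and let X̃'[T] be the analogous aggregation with X̃. Then X'[T] = X̃'[T]. -/
import Mathlib


open Matrix

/-- Proposition 1 core (mean pooling): two start nodes at equal distance `D` from a common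
target `T`, whose paths to `T` share the per-level weight matrices, are equivalent under
linear message path passing — swapping the two start features leaves the aggregate at `T`
unchanged. `U i` (resp. `V i`) is the feature of the `i`-th node on the path from `u`
(resp. `v`), so `U 0 = X[u]`, `V 0 = X[v]`, and `U (D-2)`, `V (D-2)` are the features of
`u_*`, `v_*`. `Yu, Yv` are the path-passing iterates for `X`, and `Zu, Zv` those for the
swapped features `X̃`. -/
theorem lmpp_swap_invariance_mean (n D : ℕ) (hD : 2 ≤ D)
    (U V : ℕ → Fin n → ℝ) (XT : Fin n → ℝ)
    (W : ℕ → Matrix (Fin n) (Fin n) ℝ) (WT : Matrix (Fin n) (Fin n) ℝ)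
    (Yu Yv Zu Zv : ℕ → Fin n → ℝ)
    (hYu0 : Yu 0 = U 0) (hYv0 : Yv 0 = V 0)
    (hZu0 : Zu 0 = V 0) (hZv0 : Zv 0 = U 0)
    (hYu : ∀ i, 1 ≤ i → i ≤ D - 2 →
      Yu i = ((1 / 2 : ℝ) • (Yu (i - 1) + U i)) ᵥ* W i)
    (hYv : ∀ i, 1 ≤ i → i ≤ D - 2 →
      Yv i = ((1 / 2 : ℝ) • (Yv (i - 1) + V i)) ᵥ* W i)
    (hZu : ∀ i, 1 ≤ i → i ≤ D - 2 →
      Zu i = ((1 / 2 : ℝ) • (Zu (i - 1) + U i)) ᵥ* W i)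
    (hZv : ∀ i, 1 ≤ i → i ≤ D - 2 →
      Zv i = ((1 / 2 : ℝ) • (Zv (i - 1) + V i)) ᵥ* W i) :
    ((1 / 3 : ℝ) • (XT + Yu (D - 2) + Yv (D - 2))) ᵥ* WT
      = ((1 / 3 : ℝ) • (XT + Zu (D - 2) + Zv (D - 2))) ᵥ* WT := by
  have key : ∀ i, i ≤ D - 2 → Yu i + Yv i = Zu i + Zv i := by
    intro i
    induction i with
    | zero => intro _; rw [hYu0, hYv0, hZu0, hZv0]; ring
    | succ k ih =>
      intro hk
      have hk' : k ≤ D - 2 := Nat.le_of_succ_le hk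
      have h1 : 1 ≤ k + 1 := Nat.succ_le_succ (Nat.zero_le k)
      rw [hYu (k+1) h1 hk, hYv (k+1) h1 hk, hZu (k+1) h1 hk, hZv (k+1) h1 hk]
      have hsub : k + 1 - 1 = k := rfl
      rw [hsub]
      rw [← add_vecMul, ← add_vecMul, ← smul_add, ← smul_add]
      congr 1
      have h := ih hk'
      have h2 : (1/2:ℝ) • Yu k + (1/2:ℝ) • Yv k = (1/2:ℝ) • Zu k + (1/2:ℝ) • Zv k := by
        rw [← smul_add, ← smul_add, h]
      rw [smul_add, smul_add, smul_add, smul_add, add_add_add_comm, h2,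
        add_add_add_comm, smul_add, smul_add]
  have h := key (D - 2) le_rfl
  have : XT + Yu (D - 2) + Yv (D - 2) = XT + Zu (D - 2) + Zv (D - 2) := by
    rw [add_assoc, add_assoc, h]
  rw [this]
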